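/- Let Γ be an ILX-MCS with ¬(B ▷ C) ∈ Γ. Then there is an ILX-MCS Δ such that Γ ≺_{{¬C}} Δ and B, □¬B ∈ Δ. -/

import Mathlib

inductive ILForm : Type
  | bot : ILForm
  | var : ℕ → ILForm
  | imp : ILForm → ILForm → ILForm
  | box : ILForm → ILForm
  | rhd : ILForm → ILForm → ILForm
  deriving DecidableEq

namespace ILForm

def neg (A : ILForm) : ILForm := A.imp ILForm.bot
def or (A B : ILForm) : ILForm := A.neg.imp B
def and (A B : ILForm) : ILForm := (A.imp B.neg).neg
def dia (A : ILForm) : ILForm := A.neg.box.neg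

end ILForm

/-- A Boolean valuation: respects `⊥` and `→`, arbitrary on variables, boxes and `▷`. -/
def IsBoolVal (v : ILForm → Bool) : Prop :=
  v ILForm.bot = false ∧ ∀ A B : ILForm, v (A.imp B) = (!(v A) || v B)

/-- Classical tautologies in the modal language. -/
def ILTaut (A : ILForm) : Prop := ∀ v, IsBoolVal v → v A = true

/-- Provability in the interpretability logic IL. -/
inductive ILProv : ILForm → Prop
  | taut {A : ILForm} : ILTaut A → ILProv A
  | K {A B : ILForm} : ILProv (((A.imp B).box).imp ((A.box).imp (B.box)))
  | L {A : ILForm} : ILProv ((((A.box).imp A).box).imp (A.box))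
  | J1 {A B : ILForm} : ILProv (((A.imp B).box).imp (A.rhd B))
  | J2 {A B C : ILForm} : ILProv (((A.rhd B).and (B.rhd C)).imp (A.rhd C))
  | J3 {A B C : ILForm} : ILProv (((A.rhd C).and (B.rhd C)).imp ((A.or B).rhd C))
  | J4 {A B : ILForm} : ILProv ((A.rhd B).imp ((A.dia).imp (B.dia)))
  | J5 {A : ILForm} : ILProv ((A.dia).rhd A)
  | mp {A B : ILForm} : ILProv (A.imp B) → ILProv A → ILProv B
  | nec {A : ILForm} : ILProv A → ILProv (A.box)

/-- An extension of IL: contains all IL theorems, closed under modus ponens and necessitation. -/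
structure ILExtension (P : ILForm → Prop) : Prop where
  il : ∀ {A}, ILProv A → P A
  mp : ∀ {A B}, P (A.imp B) → P A → P B
  nec : ∀ {A}, P A → P (A.box)

/-- Derivability from a set of assumptions in the logic `P`. -/
inductive Deriv (P : ILForm → Prop) (S : Set ILForm) : ILForm → Prop
  | thm {A : ILForm} : P A → Deriv P S A
  | mem {A : ILForm} : A ∈ S → Deriv P S A
  | mp {A B : ILForm} : Deriv P S (A.imp B) → Deriv P S A → Deriv P S B

def ILConsistent (P : ILForm → Prop) (S : Set ILForm) : Prop := ¬ Deriv P S ILForm.bot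

/-- Maximal consistent set w.r.t. the logic `P`. -/
def ILMCS (P : ILForm → Prop) (S : Set ILForm) : Prop :=
  ILConsistent P S ∧ ∀ T : Set ILForm, S ⊂ T → ¬ ILConsistent P T

/-- Finite disjunction; the empty disjunction is `⊥`. -/
def bigOr : List ILForm → ILForm
  | [] => ILForm.bot
  | A :: l => A.or (bigOr l)

/-- `Assuring Γ Δ S` ("Γ ≺_S Δ"): Δ is an S-assuring successor of Γ. -/
def Assuring (Γ Δ : Set ILForm) (S : Set ILForm) : Prop :=
  ∀ (A : ILForm) (L : List ILForm), (∀ B ∈ L, B ∈ S) →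
    (A.neg.rhd (bigOr (L.map ILForm.neg))) ∈ Γ → A ∈ Δ ∧ A.box ∈ Δ

/-- `Succ Γ Δ` ("Γ ≺ Δ"): whenever □A ∈ Γ, both A and □A are in Δ. -/
def Succ (Γ Δ : Set ILForm) : Prop :=
  ∀ A : ILForm, A.box ∈ Γ → A ∈ Δ ∧ A.box ∈ Δ

section Aux

open ILForm

variable {P : ILForm → Prop}

/-! ### Tautologies -/

lemma taut_I (A : ILForm) : ILTaut (A.imp A) := by
  intro v ⟨h0, h1⟩; simp [h1]

lemma taut_K' (A B : ILForm) : ILTaut (A.imp (B.imp A)) := by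
  intro v ⟨h0, h1⟩; simp [h1]; cases v A <;> simp

lemma taut_S' (A B C : ILForm) :
    ILTaut ((A.imp (B.imp C)).imp ((A.imp B).imp (A.imp C))) := by
  intro v ⟨h0, h1⟩; simp [h1]
  cases v A <;> cases v B <;> cases v C <;> simp

lemma taut_and_intro (A B : ILForm) : ILTaut (A.imp (B.imp (A.and B))) := by
  intro v ⟨h0, h1⟩; simp [ILForm.and, ILForm.neg, h1, h0]
  cases v A <;> cases v B <;> simp

lemma taut_and_left (A B : ILForm) : ILTaut ((A.and B).imp A) := by
  intro v ⟨h0, h1⟩; simp [ILForm.and, ILForm.neg, h1, h0]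
  cases v A <;> cases v B <;> simp

lemma taut_and_right (A B : ILForm) : ILTaut ((A.and B).imp B) := by
  intro v ⟨h0, h1⟩; simp [ILForm.and, ILForm.neg, h1, h0]
  cases v A <;> cases v B <;> simp

lemma taut_deMorgan (A B : ILForm) : ILTaut ((A.and B).neg.imp (A.neg.or B.neg)) := by
  intro v ⟨h0, h1⟩; simp [ILForm.and, ILForm.or, ILForm.neg, h1, h0]
  cases v A <;> cases v B <;> simp

lemma taut_comp (A B C : ILForm) : ILTaut ((A.imp B).imp ((B.imp C).imp (A.imp C))) := by
  intro v ⟨h0, h1⟩; simp [h1]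
  cases v A <;> cases v B <;> cases v C <;> simp

lemma taut_dne (A : ILForm) : ILTaut (A.neg.neg.imp A) := by
  intro v ⟨h0, h1⟩; simp [ILForm.neg, h1, h0]

lemma taut_topneg (C : ILForm) :
    ILTaut (((ILForm.bot.imp ILForm.bot).neg).imp C) := by
  intro v ⟨h0, h1⟩; simp [ILForm.neg, h1, h0]

/-- T1: ¬(A ∧ □¬A) → (□¬A → ¬A). -/
lemma taut_T1 (A : ILForm) :
    ILTaut ((A.and A.neg.box).neg.imp ((A.neg.box).imp A.neg)) := by
  intro v ⟨h0, h1⟩; simp [ILForm.and, ILForm.neg, h1, h0]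
  cases v A <;> cases v (A.neg.box) <;> simp

/-- T2 glue: (□¬D → □¬A) → (A → D ∨ ◇D), where D = A ∧ □¬A. -/
lemma taut_T2 (A : ILForm) :
    ILTaut ((((A.and A.neg.box).neg.box).imp (A.neg.box)).imp
      (A.imp ((A.and A.neg.box).or ((A.and A.neg.box).dia)))) := by
  intro v ⟨h0, h1⟩
  simp only [ILForm.and, ILForm.or, ILForm.dia, ILForm.neg, h1, h0]
  cases v A <;> cases v ((A.imp ((A.imp ILForm.bot).box.imp ILForm.bot)).imp ILForm.bot).box <;>
    cases v (((((A.imp ((A.imp ILForm.bot).box.imp ILForm.bot)).imp ILForm.bot).imp ILForm.bot).imp ILForm.bot).box) <;>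
    cases v ((A.imp ILForm.bot).box) <;> simp

/-- T3 glue: from (B → □¬B → A → □A → ⊥) and (□¬¬A → □A) conclude
    (B ∧ □¬B) → (¬A ∨ ◇¬A). -/
lemma taut_T3 (A B : ILForm) :
    ILTaut (((A.box).imp (A.imp ((B.neg.box).imp (B.imp ILForm.bot)))).imp
      (((A.neg.neg.box).imp A.box).imp
        ((B.and B.neg.box).imp ((A.neg).or ((A.neg).dia))))) := by
  intro v ⟨h0, h1⟩
  simp only [ILForm.and, ILForm.or, ILForm.dia, ILForm.neg, h1, h0]
  cases v A <;> cases v B <;> cases v (A.box) <;>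
    cases v ((B.imp ILForm.bot).box) <;>
    cases v (((A.imp ILForm.bot).imp ILForm.bot).box) <;> simp

lemma taut_bigOr (C : ILForm) :
    ∀ (L : List ILForm), (∀ x ∈ L, x = C.neg) →
      ILTaut ((bigOr (L.map ILForm.neg)).imp C)
  | [], _ => by
      intro v ⟨h0, h1⟩; simp [bigOr, h1, h0]
  | x :: L, hx => by
      intro v hv
      obtain ⟨h0, h1⟩ := hv
      have ih := taut_bigOr C L (fun y hy => hx y (List.mem_cons_of_mem _ hy)) v ⟨h0, h1⟩
      have hxC : x = C.neg := hx x List.mem_cons_self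
      subst hxC
      simp only [List.map, bigOr, ILForm.or, ILForm.neg, h1, h0] at ih ⊢
      cases hC : v C <;> cases hR : v (bigOr (L.map ILForm.neg)) <;> simp_all

/-! ### Basic P-level derived rules -/

lemma pt (hP : ILExtension P) {A : ILForm} (h : ILTaut A) : P A := hP.il (ILProv.taut h)

lemma pand (hP : ILExtension P) {A B : ILForm} (hA : P A) (hB : P B) : P (A.and B) :=
  hP.mp (hP.mp (pt hP (taut_and_intro A B)) hA) hB

lemma pimp_rhd (hP : ILExtension P) {A B : ILForm} (h : P (A.imp B)) : P (A.rhd B) :=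
  hP.mp (hP.il ILProv.J1) (hP.nec h)

lemma pchain (hP : ILExtension P) {A B C : ILForm} (h1 : P (A.imp B)) (h2 : P (B.imp C)) :
    P (A.imp C) :=
  hP.mp (hP.mp (pt hP (taut_comp A B C)) h1) h2

lemma pbox_mono (hP : ILExtension P) {A B : ILForm} (h : P (A.imp B)) :
    P (A.box.imp B.box) :=
  hP.mp (hP.il ILProv.K) (hP.nec h)

lemma prhd_trans (hP : ILExtension P) {A B C : ILForm} (h1 : P (A.rhd B)) (h2 : P (B.rhd C)) :
    P (A.rhd C) :=
  hP.mp (hP.il ILProv.J2) (pand hP h1 h2)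

/-- The key GL/IL fact: A ▷ (A ∧ □¬A). -/
lemma prhd_self_box (hP : ILExtension P) (A : ILForm) :
    P (A.rhd (A.and A.neg.box)) := by
  have g0 : P ((A.and A.neg.box).neg.imp ((A.neg.box).imp A.neg)) := pt hP (taut_T1 A)
  have g1 : P (((A.and A.neg.box).neg.box).imp (((A.neg.box).imp A.neg).box)) :=
    pbox_mono hP g0
  have g2 : P ((((A.neg.box).imp A.neg).box).imp (A.neg.box)) := hP.il ILProv.L
  have g3 : P (((A.and A.neg.box).neg.box).imp (A.neg.box)) := pchain hP g1 g2
  have g4 : P (A.imp ((A.and A.neg.box).or ((A.and A.neg.box).dia))) :=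
    hP.mp (pt hP (taut_T2 A)) g3
  have r1 : P (A.rhd ((A.and A.neg.box).or ((A.and A.neg.box).dia))) := pimp_rhd hP g4
  have r2 : P (((A.and A.neg.box).or ((A.and A.neg.box).dia)).rhd (A.and A.neg.box)) :=
    hP.mp (hP.il ILProv.J3)
      (pand hP (pimp_rhd hP (pt hP (taut_I (A.and A.neg.box)))) (hP.il ILProv.J5))
  exact prhd_trans hP r1 r2

/-! ### Derivability facts -/

lemma deriv_mono {S T : Set ILForm} (hST : S ⊆ T) {F : ILForm} (h : Deriv P S F) :
    Deriv P T F := by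
  induction h with
  | thm h => exact .thm h
  | mem h => exact .mem (hST h)
  | mp _ _ ih1 ih2 => exact .mp ih1 ih2

lemma deriv_cut {S T : Set ILForm} {F : ILForm} (h : Deriv P T F)
    (hall : ∀ x ∈ T, Deriv P S x) : Deriv P S F := by
  induction h with
  | thm h => exact .thm h
  | mem h => exact hall _ h
  | mp _ _ ih1 ih2 => exact .mp ih1 ih2

lemma dand (hP : ILExtension P) {S : Set ILForm} {A B : ILForm}
    (hA : Deriv P S A) (hB : Deriv P S B) : Deriv P S (A.and B) :=
  .mp (.mp (.thm (pt hP (taut_and_intro A B))) hA) hB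

lemma deriv_deduction (hP : ILExtension P) {S : Set ILForm} {x F : ILForm}
    (h : Deriv P (insert x S) F) : Deriv P S (x.imp F) := by
  induction h with
  | thm h => exact Deriv.mp (Deriv.thm (pt hP (taut_K' _ _))) (Deriv.thm h)
  | mem h =>
      rcases h with h | h
      · rw [h]; exact Deriv.thm (pt hP (taut_I _))
      · exact Deriv.mp (Deriv.thm (pt hP (taut_K' _ _))) (Deriv.mem h)
  | mp h1 h2 ih1 ih2 =>
      exact Deriv.mp (Deriv.mp (Deriv.thm (pt hP (taut_S' _ _ _))) ih1) ih2

lemma deriv_empty (hP : ILExtension P) {F : ILForm} (h : Deriv P (∅ : Set ILForm) F) : P F := by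
  induction h with
  | thm h => exact h
  | mem h => exact absurd h (Set.notMem_empty _)
  | mp _ _ ih1 ih2 => exact hP.mp ih1 ih2

lemma deriv_finset {S : Set ILForm} {F : ILForm} (h : Deriv P S F) :
    ∃ T : Finset ILForm, ↑T ⊆ S ∧ Deriv P (↑T : Set ILForm) F := by
  induction h with
  | @thm A h => exact ⟨∅, by simp, .thm h⟩
  | @mem A h => exact ⟨{A}, by simpa using h, .mem (by simp)⟩
  | mp _ _ ih1 ih2 =>
      obtain ⟨T₁, hT₁, hd₁⟩ := ih1
      obtain ⟨T₂, hT₂, hd₂⟩ := ih2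
      have m1 : (↑T₁ : Set ILForm) ⊆ ↑(T₁ ∪ T₂) := by
        intro x hx; simp only [Finset.coe_union, Set.mem_union]; exact Or.inl hx
      have m2 : (↑T₂ : Set ILForm) ⊆ ↑(T₁ ∪ T₂) := by
        intro x hx; simp only [Finset.coe_union, Set.mem_union]; exact Or.inr hx
      refine ⟨T₁ ∪ T₂, ?_, Deriv.mp (deriv_mono m1 hd₁) (deriv_mono m2 hd₂)⟩
      intro x hx
      rcases Finset.mem_union.1 (by exact_mod_cast hx) with hx | hx
      · exact hT₁ hx
      · exact hT₂ hx

/-! ### MCS facts -/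

lemma mcs_closed {Γ : Set ILForm} (hΓ : ILMCS P Γ) {F : ILForm}
    (h : Deriv P Γ F) : F ∈ Γ := by
  by_contra hF
  have hsub : Γ ⊂ insert F Γ := Set.ssubset_insert hF
  have hbot : Deriv P (insert F Γ) ILForm.bot := by
    by_contra hc; exact hΓ.2 _ hsub hc
  refine hΓ.1 (deriv_cut hbot ?_)
  rintro x (hx | hx)
  · subst hx; exact h
  · exact .mem hx

lemma deriv_sUnion_chain {c : Set (Set ILForm)} (hc : IsChain (· ⊆ ·) c)
    (hne : c.Nonempty) {F : ILForm} (h : Deriv P (⋃₀ c) F) :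
    ∃ t ∈ c, Deriv P t F := by
  induction h with
  | thm h => obtain ⟨t, ht⟩ := hne; exact ⟨t, ht, .thm h⟩
  | mem h => obtain ⟨t, ht, hx⟩ := h; exact ⟨t, ht, .mem hx⟩
  | mp _ _ ih1 ih2 =>
      obtain ⟨t₁, ht₁, hd₁⟩ := ih1
      obtain ⟨t₂, ht₂, hd₂⟩ := ih2
      by_cases he : t₁ = t₂
      · subst he; exact ⟨t₁, ht₁, .mp hd₁ hd₂⟩
      · rcases hc ht₁ ht₂ he with hle | hle
        · exact ⟨t₂, ht₂, .mp (deriv_mono hle hd₁) hd₂⟩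
        · exact ⟨t₁, ht₁, .mp hd₁ (deriv_mono hle hd₂)⟩

lemma lindenbaum (hP : ILExtension P) {S : Set ILForm} (h : ILConsistent P S) :
    ∃ Δ : Set ILForm, S ⊆ Δ ∧ ILMCS P Δ := by
  have := zorn_subset_nonempty {T : Set ILForm | S ⊆ T ∧ ILConsistent P T}
    (fun c hc hchain hne => by
      refine ⟨⋃₀ c, ⟨?_, ?_⟩, fun s hs => Set.subset_sUnion_of_mem hs⟩
      · obtain ⟨t, ht⟩ := hne
        exact (hc ht).1.trans (Set.subset_sUnion_of_mem ht)
      · intro hbot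
        obtain ⟨t, ht, hd⟩ := deriv_sUnion_chain hchain hne hbot
        exact (hc ht).2 hd) S ⟨subset_rfl, h⟩
  obtain ⟨m, hSm, hmax⟩ := this
  refine ⟨m, hSm, hmax.1.2, fun T hT hTc => ?_⟩
  have hTS : T ∈ {T : Set ILForm | S ⊆ T ∧ ILConsistent P T} := ⟨hSm.trans hT.subset, hTc⟩
  exact hT.not_subset (hmax.2 hTS hT.subset)

end Aux

section Main

open ILForm

variable {P : ILForm → Prop}

/-- The candidate set. -/
def delta0 (Γ : Set ILForm) (B C : ILForm) : Set ILForm :=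
  insert B (insert (B.neg.box)
    {F | ∃ A : ILForm, (A.neg.rhd C) ∈ Γ ∧ (F = A ∨ F = A.box)})

/-- A simple four-element set. -/
def sFour (B A : ILForm) : Set ILForm :=
  insert B (insert (B.neg.box) (insert A (insert (A.box) (∅ : Set ILForm))))

lemma X_top (hP : ILExtension P) {Γ : Set ILForm} (hΓ : ILMCS P Γ) (C : ILForm) :
    (((ILForm.bot.imp ILForm.bot).neg).rhd C) ∈ Γ :=
  mcs_closed hΓ (.thm (pimp_rhd hP (pt hP (taut_topneg C))))

lemma X_and (hP : ILExtension P) {Γ : Set ILForm} (hΓ : ILMCS P Γ) {C A A' : ILForm}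
    (hA : (A.neg.rhd C) ∈ Γ) (hA' : (A'.neg.rhd C) ∈ Γ) :
    (((A.and A').neg).rhd C) ∈ Γ := by
  have d1 : Deriv P Γ (((A.and A').neg).rhd (A.neg.or A'.neg)) :=
    .thm (pimp_rhd hP (pt hP (taut_deMorgan A A')))
  have d2 : Deriv P Γ ((A.neg.or A'.neg).rhd C) :=
    .mp (.thm (hP.il ILProv.J3)) (dand hP (.mem hA) (.mem hA'))
  exact mcs_closed hΓ (.mp (.thm (hP.il ILProv.J2)) (dand hP (.mp (.thm (hP.il ILProv.J2)) (dand hP d1 d2)) (.thm (pimp_rhd hP (pt hP (taut_I C))))))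

lemma cover (hP : ILExtension P) {Γ : Set ILForm} (hΓ : ILMCS P Γ) (B C : ILForm)
    (T : Finset ILForm) (hT : ↑T ⊆ delta0 Γ B C) :
    ∃ A : ILForm, (A.neg.rhd C) ∈ Γ ∧ ∀ x ∈ T, Deriv P (sFour B A) x := by
  classical
  induction T using Finset.induction_on with
  | empty =>
      exact ⟨ILForm.bot.imp ILForm.bot, X_top hP hΓ C, fun x hx => absurd hx (by simp)⟩
  | @insert x T hx ih =>
      have hT' : ↑T ⊆ delta0 Γ B C := by
        intro y hy; exact hT (by exact_mod_cast Finset.mem_insert_of_mem hy)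
      obtain ⟨A, hXA, hall⟩ := ih hT'
      have hxΔ : x ∈ delta0 Γ B C := hT (by exact_mod_cast Finset.mem_insert_self x T)
      rcases hxΔ with hxB | hxBB | ⟨A', hXA', hAA'⟩
      · refine ⟨A, hXA, fun y hy => ?_⟩
        rcases Finset.mem_insert.1 hy with hh | hy
        · exact Deriv.mem (by rw [hh, hxB]; simp [sFour])
        · exact hall y hy
      · refine ⟨A, hXA, fun y hy => ?_⟩
        rcases Finset.mem_insert.1 hy with hh | hy
        · exact Deriv.mem (by rw [hh, hxBB]; simp [sFour])
        · exact hall y hy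
      · refine ⟨A.and A', X_and hP hΓ hXA hXA', fun y hy => ?_⟩
        have hmemA : (A.and A') ∈ sFour B (A.and A') := by simp [sFour]
        have hmemAb : (A.and A').box ∈ sFour B (A.and A') := by simp [sFour]
        have hsub : ∀ z ∈ sFour B A, Deriv P (sFour B (A.and A')) z := by
          intro z hz
          simp only [sFour, Set.mem_insert_iff, Set.mem_empty_iff_false, or_false] at hz
          rcases hz with hh | hh | hh | hh
          · rw [hh]; exact Deriv.mem (by simp [sFour])
          · rw [hh]; exact Deriv.mem (by simp [sFour])
          · rw [hh]; exact Deriv.mp (Deriv.thm (pt hP (taut_and_left A A'))) (Deriv.mem hmemA)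
          · rw [hh]; exact Deriv.mp (Deriv.thm (pbox_mono hP (pt hP (taut_and_left A A')))) (Deriv.mem hmemAb)
        rcases Finset.mem_insert.1 hy with hh | hy
        · rw [hh]
          rcases hAA' with hh' | hh'
          · rw [hh']; exact Deriv.mp (Deriv.thm (pt hP (taut_and_right A A'))) (Deriv.mem hmemA)
          · rw [hh']; exact Deriv.mp (Deriv.thm (pbox_mono hP (pt hP (taut_and_right A A')))) (Deriv.mem hmemAb)
        · exact deriv_cut (hall y hy) hsub

lemma delta0_consistent (hP : ILExtension P) {Γ : Set ILForm} (hΓ : ILMCS P Γ)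
    {B C : ILForm} (h : (B.rhd C).neg ∈ Γ) : ILConsistent P (delta0 Γ B C) := by
  intro hbot
  obtain ⟨T, hTsub, hTd⟩ := deriv_finset hbot
  obtain ⟨A, hXA, hall⟩ := cover hP hΓ B C T hTsub
  have hS : Deriv P (insert B (insert (B.neg.box) (insert A (insert (A.box)
      (∅ : Set ILForm))))) ILForm.bot :=
    deriv_cut hTd (fun x hx => hall x (by exact_mod_cast hx))
  have d4 : Deriv P (∅ : Set ILForm)
      ((A.box).imp (A.imp ((B.neg.box).imp (B.imp ILForm.bot)))) :=
    deriv_deduction hP (deriv_deduction hP (deriv_deduction hP (deriv_deduction hP hS)))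
  have hφ : P ((A.box).imp (A.imp ((B.neg.box).imp (B.imp ILForm.bot)))) := deriv_empty hP d4
  -- now derive B ▷ ¬A as a theorem
  have p1f : P ((A.neg.neg.box).imp (A.box)) := pbox_mono hP (pt hP (taut_dne A))
  have rB : P (B.rhd (B.and B.neg.box)) := prhd_self_box hP B
  have rE : P ((B.and B.neg.box).rhd ((A.neg).or ((A.neg).dia))) :=
    pimp_rhd hP (hP.mp (hP.mp (pt hP (taut_T3 A B)) hφ) p1f)
  have rJ : P (((A.neg).or ((A.neg).dia)).rhd (A.neg)) :=
    hP.mp (hP.il ILProv.J3)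
      (pand hP (pimp_rhd hP (pt hP (taut_I (A.neg)))) (hP.il ILProv.J5))
  have rBA : P (B.rhd (A.neg)) := prhd_trans hP (prhd_trans hP rB rE) rJ
  have dBC : Deriv P Γ (B.rhd C) :=
    .mp (.thm (hP.il ILProv.J2)) (dand hP (.thm rBA) (.mem hXA))
  exact hΓ.1 (.mp (.mem h) dBC)

end Main

/-- If ¬(B ▷ C) ∈ Γ then there is Δ with Γ ≺_{{¬C}} Δ and B, □¬B ∈ Δ. -/
theorem assuring_successor_from_neg_rhd (P : ILForm → Prop) (hP : ILExtension P)
    (Γ : Set ILForm) (hΓ : ILMCS P Γ) (B C : ILForm) (h : (B.rhd C).neg ∈ Γ) :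
    ∃ Δ : Set ILForm, ILMCS P Δ ∧ Assuring Γ Δ {C.neg} ∧ B ∈ Δ ∧ B.neg.box ∈ Δ := by
  obtain ⟨Δ, hsub, hΔ⟩ := lindenbaum hP (delta0_consistent hP hΓ h)
  refine ⟨Δ, hΔ, ?_, hsub (by simp [delta0]), hsub (by simp [delta0])⟩
  intro A L hL hA
  have htb : ILTaut ((bigOr (L.map ILForm.neg)).imp C) :=
    taut_bigOr C L (fun x hx => Set.eq_of_mem_singleton (hL x hx))
  have h2 : P ((bigOr (L.map ILForm.neg)).rhd C) := pimp_rhd hP (pt hP htb)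
  have h3 : (A.neg.rhd C) ∈ Γ :=
    mcs_closed hΓ (.mp (.thm (hP.il ILProv.J2)) (dand hP (.mem hA) (.thm h2)))
  constructor
  · exact hsub (Or.inr (Or.inr ⟨A, h3, Or.inl rfl⟩))
  · exact hsub (Or.inr (Or.inr ⟨A, h3, Or.inr rfl⟩))
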